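/- Let f : ℝⁿ → ℝ be measurable, nonnegative, and positively homogeneous of degree d > 0, with bounded sublevel set G = {x : f(x) ≤ 1}. Then for every k ∈ ℕ, ∫_G f(x)^k dx = (n/(n + kd)) · vol(G). -/

import Mathlib

open MeasureTheory Pointwise

set_option maxHeartbeats 1000000 in
/-- For `f` measurable, nonnegative, positively homogeneous of degree `d > 0` with
bounded sublevel set `G = {f ≤ 1}`, for every `k : ℕ`,
`∫_G f^k = (n/(n+kd)) · vol(G)`. -/
theorem integral_pow_eq (n : ℕ) (hn : 0 < n) (d : ℝ) (hd : 0 < d)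
    (f : (Fin n → ℝ) → ℝ) (hmeas : Measurable f) (hpos : ∀ x, 0 ≤ f x)
    (hhom : ∀ c : ℝ, 0 < c → ∀ x, f (c • x) = c ^ d * f x)
    (hbdd : Bornology.IsBounded {x : Fin n → ℝ | f x ≤ 1}) :
    ∀ k : ℕ,
      ∫ x in {x : Fin n → ℝ | f x ≤ 1}, f x ^ k =
        ((n : ℝ) / ((n : ℝ) + k * d)) * (volume {x : Fin n → ℝ | f x ≤ 1}).toReal := by
  intro k
  set G := {x : Fin n → ℝ | f x ≤ 1} with hGdef
  have hGmeas : MeasurableSet G := hmeas measurableSet_Iic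
  have hGfin : volume G < ⊤ := hbdd.measure_lt_top
  -- scaling of sublevel sets
  have hscale : ∀ s : ℝ, 0 < s → volume {x : Fin n → ℝ | f x ≤ s}
      = ENNReal.ofReal (s ^ ((n : ℝ) / d)) * volume G := by
    intro s hs
    have hc : (0:ℝ) < s ^ (1/d) := Real.rpow_pos_of_pos hs _
    have hset : {x : Fin n → ℝ | f x ≤ s} = (s ^ (1/d) : ℝ) • G := by
      ext x
      simp only [Set.mem_smul_set_iff_inv_smul_mem₀ hc.ne', hGdef, Set.mem_setOf_eq]
      rw [hhom _ (inv_pos.mpr hc) x]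
      have h1 : (s ^ (1/d))⁻¹ ^ d = s⁻¹ := by
        rw [← Real.rpow_neg_one (s ^ (1/d)), ← Real.rpow_mul hs.le, ← Real.rpow_mul hs.le,
          ← Real.rpow_neg_one s]
        congr 1
        field_simp
      rw [h1, ← one_div, div_mul_eq_mul_div, one_mul, div_le_one hs]
    rw [hset, Measure.addHaar_smul]
    congr 2
    rw [Module.finrank_pi, Fintype.card_fin, abs_of_pos (pow_pos hc n),
      ← Real.rpow_natCast _ n, ← Real.rpow_mul hs.le, one_div, inv_mul_eq_div]
  rcases Nat.eq_zero_or_pos k with hk | hk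
  · subst hk
    simp only [pow_zero, Nat.cast_zero, zero_mul, add_zero, integral_const, smul_eq_mul, mul_one,
      Measure.real, Measure.restrict_apply_univ]
    rw [div_self (by positivity : (n:ℝ) ≠ 0), one_mul]
  -- main case k ≥ 1
  haveI : IsFiniteMeasure (volume.restrict G) := ⟨by rwa [Measure.restrict_apply_univ]⟩
  have hgm : Measurable fun x => f x ^ k := hmeas.pow_const k
  have hint : Integrable (fun x => f x ^ k) (volume.restrict G) := by
    refine Integrable.mono' (integrable_const 1) hgm.aestronglyMeasurable ?_
    refine (ae_restrict_iff' hGmeas).mpr (ae_of_all _ fun x hx => ?_)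
    rw [Real.norm_eq_abs, abs_of_nonneg (pow_nonneg (hpos x) k)]
    exact pow_le_one₀ (hpos x) hx
  have h_nn : 0 ≤ᵐ[volume.restrict G] fun x => f x ^ k :=
    ae_of_all _ fun x => pow_nonneg (hpos x) k
  rw [hint.integral_eq_integral_meas_lt h_nn]
  set q : ℝ := (n : ℝ) / (k * d) with hqdef
  have hkd : (0:ℝ) < k * d := by positivity
  have hq : 0 < q := by positivity
  have hrestr : ∀ t : ℝ, (volume.restrict G) {a | t < f a ^ k}
      = volume ({a | t < f a ^ k} ∩ G) := fun t =>
    Measure.restrict_apply (hgm measurableSet_Ioi)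
  have hzero : ∀ t : ℝ, 1 ≤ t → (volume.restrict G) {a | t < f a ^ k} = 0 := by
    intro t ht
    rw [hrestr]
    have hemp : {a | t < f a ^ k} ∩ G = ∅ := by
      ext a
      simp only [Set.mem_inter_iff, Set.mem_setOf_eq, Set.mem_empty_iff_false, iff_false, not_and,
        hGdef]
      intro hlt hle
      exact absurd (lt_of_le_of_lt (le_trans (pow_le_one₀ (hpos a) hle) ht) hlt) (lt_irrefl _)
    simp [hemp]
  have hval : ∀ t ∈ Set.Ioo (0:ℝ) 1,
      ((volume.restrict G) {a | t < f a ^ k}).toReal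
        = (volume G).toReal * (1 - t ^ q) := by
    intro t ht
    obtain ⟨ht0, ht1⟩ := ht
    set s : ℝ := t ^ ((k:ℝ))⁻¹ with hsdef
    have hs0 : 0 < s := Real.rpow_pos_of_pos ht0 _
    have hs1 : s ≤ 1 := Real.rpow_le_one ht0.le ht1.le (by positivity)
    have hSsub : {x : Fin n → ℝ | f x ≤ s} ⊆ G := fun x hx => le_trans hx hs1
    have hSmeas : MeasurableSet {x : Fin n → ℝ | f x ≤ s} := hmeas measurableSet_Iic
    have hsetdiff : {a | t < f a ^ k} ∩ G = G \ {x : Fin n → ℝ | f x ≤ s} := by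
      ext a
      simp only [Set.mem_inter_iff, Set.mem_setOf_eq, Set.mem_diff]
      have hiff : f a ≤ s ↔ f a ^ k ≤ t := by
        rw [hsdef, Real.le_rpow_inv_iff_of_pos (hpos a) ht0.le (by positivity),
          Real.rpow_natCast]
      constructor
      · rintro ⟨h1, h2⟩; exact ⟨h2, fun hle => absurd (hiff.mp hle) (not_le.mpr h1)⟩
      · rintro ⟨h1, h2⟩; exact ⟨not_le.mp (fun hle => h2 (hiff.mpr hle)), h1⟩
    rw [hrestr, hsetdiff, measure_diff hSsub hSmeas.nullMeasurableSet
        (ne_top_of_lt (lt_of_le_of_lt (measure_mono hSsub) hGfin)),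
      hscale s hs0]
    have hsq : s ^ ((n:ℝ)/d) = t ^ q := by
      rw [hsdef, ← Real.rpow_mul ht0.le, hqdef]
      congr 1
      field_simp
    rw [hsq]
    have htq1 : t ^ q ≤ 1 := Real.rpow_le_one ht0.le ht1.le hq.le
    have hle1 : ENNReal.ofReal (t ^ q) * volume G ≤ volume G :=
      mul_le_of_le_one_left' (ENNReal.ofReal_le_one.mpr htq1)
    rw [ENNReal.toReal_sub_of_le hle1 hGfin.ne, ENNReal.toReal_mul,
      ENNReal.toReal_ofReal (Real.rpow_nonneg ht0.le _)]
    ring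
  have hsplit : ∫ t in Set.Ioi (0:ℝ), ((volume.restrict G) {a | t < f a ^ k}).toReal
      = ∫ t in Set.Ioo (0:ℝ) 1, (volume G).toReal * (1 - t ^ q) := by
    rw [setIntegral_congr_fun (g := (Set.Ioo (0:ℝ) 1).indicator
        (fun t => (volume G).toReal * (1 - t ^ q))) measurableSet_Ioi ?_]
    · rw [integral_indicator measurableSet_Ioo, Measure.restrict_restrict measurableSet_Ioo,
        Set.inter_eq_self_of_subset_left Set.Ioo_subset_Ioi_self]
    · intro t ht
      show ((volume.restrict G) {a | t < f a ^ k}).toReal = _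
      by_cases h1 : t < 1
      · rw [Set.indicator_of_mem (Set.mem_Ioo.mpr ⟨ht, h1⟩)]
        exact hval t (Set.mem_Ioo.mpr ⟨ht, h1⟩)
      · rw [Set.indicator_of_notMem (fun hmem => h1 (Set.mem_Ioo.mp hmem).2),
          hzero t (not_lt.mp h1), ENNReal.toReal_zero]
  simp only [Measure.real]
  rw [hsplit]
  rw [← MeasureTheory.integral_Ioc_eq_integral_Ioo,
    ← intervalIntegral.integral_of_le (by norm_num : (0:ℝ) ≤ 1),
    intervalIntegral.integral_const_mul,
    intervalIntegral.integral_sub intervalIntegrable_const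
      (intervalIntegral.intervalIntegrable_rpow (Or.inl hq.le)),
    integral_rpow (Or.inl (by linarith : (-1:ℝ) < q)),
    Real.one_rpow, Real.zero_rpow (by positivity : q + 1 ≠ 0)]
  have hnkd : (n:ℝ) + k * d ≠ 0 := by positivity
  rw [hqdef]
  field_simp
  simp only [intervalIntegral.integral_const, smul_eq_mul, sub_zero, mul_one]
  ring
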